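/- Let (λ_n)_{n≥1} be a strictly increasing sequence of positive reals and (a_n) a sequence with ∑ |a_n| < ∞. If ∑_{n=1}^∞ a_n (1 − e^{−λ_n t}) = 0 for all t in some interval (0, ε) with ε > 0, then a_n = 0 for every n. -/

import Mathlib

open Filter Topology

/-- If `∑ aₙ (1 − e^{−λₙ t}) = 0` on an interval `(0, ε)` with `λₙ > 0` strictly
increasing and `(aₙ)` absolutely summable, then all `aₙ = 0`. -/
theorem stmt_4 (lam : ℕ → ℝ) (hpos : ∀ n, 0 < lam n) (hmono : StrictMono lam)
    (a : ℕ → ℝ) (ha : Summable fun n => |a n|) (ε : ℝ) (hε : 0 < ε)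
    (h : ∀ t ∈ Set.Ioo (0 : ℝ) ε,
      ∑' n, a n * (1 - Real.exp (-lam n * t)) = 0) :
    ∀ n, a n = 0 := by
  have haS : Summable a := summable_abs_iff.mp ha
  -- summability of the exponentially weighted series
  have hsum : ∀ t : ℝ, 0 ≤ t → Summable fun n => a n * Real.exp (-lam n * t) := by
    intro t ht
    refine ha.of_norm_bounded fun n => ?_
    rw [norm_mul, Real.norm_eq_abs, Real.norm_eq_abs, Real.abs_exp]
    have : Real.exp (-lam n * t) ≤ 1 := by
      rw [Real.exp_le_one_iff]
      exact mul_nonpos_of_nonpos_of_nonneg (neg_nonpos.mpr (hpos n).le) ht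
    calc |a n| * Real.exp (-lam n * t) ≤ |a n| * 1 :=
          mul_le_mul_of_nonneg_left this (abs_nonneg _)
      _ = |a n| := mul_one _
  set S : ℝ := ∑' n, a n with hSdef
  set g : ℝ → ℝ := fun t => ∑' n, a n * Real.exp (-lam n * t) with hgdef
  -- on (0, ε) the weighted sum equals S
  have hg_eq : ∀ t ∈ Set.Ioo (0 : ℝ) ε, g t = S := by
    intro t ht
    have h0 := h t ht
    have : (fun n => a n * (1 - Real.exp (-lam n * t)))
        = fun n => a n - a n * Real.exp (-lam n * t) := by
      funext n; ring
    rw [this, Summable.tsum_sub haS (hsum t ht.1.le)] at h0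
    show (∑' n, a n * Real.exp (-lam n * t)) = ∑' n, a n
    linarith [h0]
  -- Complex extension
  set U : Set ℂ := {z : ℂ | 0 < z.re} with hUdef
  set G : ℂ → ℂ := fun z => ∑' n, (a n : ℂ) * Complex.exp (-lam n * z) with hGdef
  have hUopen : IsOpen U := isOpen_lt continuous_const Complex.continuous_re
  have hUconn : IsPreconnected U := (convex_halfSpace_re_gt (0 : ℝ)).isPreconnected
  have hnorm : ∀ (n : ℕ) (z : ℂ), z ∈ U →
      ‖(a n : ℂ) * Complex.exp (-lam n * z)‖ ≤ |a n| := by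
    intro n z hz
    rw [norm_mul, Complex.norm_real, Real.norm_eq_abs,
      Complex.norm_exp]
    have hre : (-(lam n : ℂ) * z).re = -lam n * z.re := by
      simp [Complex.mul_re]
    rw [hre]
    have : Real.exp (-lam n * z.re) ≤ 1 := by
      rw [Real.exp_le_one_iff]
      exact mul_nonpos_of_nonpos_of_nonneg (neg_nonpos.mpr (hpos n).le) hz.le
    calc |a n| * Real.exp (-lam n * z.re) ≤ |a n| * 1 :=
          mul_le_mul_of_nonneg_left this (abs_nonneg _)
      _ = |a n| := mul_one _
  have hGdiff : DifferentiableOn ℂ G U := by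
    refine Complex.differentiableOn_tsum_of_summable_norm ha (fun n => ?_) hUopen hnorm
    exact (Differentiable.differentiableOn (by fun_prop))
  have hGanal : AnalyticOnNhd ℂ G U := hGdiff.analyticOnNhd hUopen
  -- G at real points
  have hG_real : ∀ t : ℝ, 0 ≤ t → G (t : ℂ) = ((g t : ℝ) : ℂ) := by
    intro t ht
    show (∑' n, (a n : ℂ) * Complex.exp (-lam n * (t : ℂ))) = _
    rw [Complex.ofReal_tsum]
    refine tsum_congr fun n => ?_
    rw [Complex.ofReal_mul, Complex.ofReal_exp]
    congr 2
    push_cast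
    ring
  -- identity theorem: G = const S on U
  have hfreq : ∃ᶠ z in 𝓝[≠] ((ε / 2 : ℝ) : ℂ), G z = ((S : ℝ) : ℂ) := by
    set u : ℕ → ℂ := fun k => ((ε / 2 + ε / 4 * (1 / (k + 1)) : ℝ) : ℂ) with hu
    have htend : Tendsto u atTop (𝓝[≠] ((ε / 2 : ℝ) : ℂ)) := by
      have h1 : Tendsto (fun k : ℕ => ε / 2 + ε / 4 * (1 / (k + 1))) atTop (𝓝 (ε / 2)) := by
        have := tendsto_one_div_add_atTop_nhds_zero_nat (𝕜 := ℝ)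
        have := ((this.const_mul (ε / 4)).const_add (ε / 2))
        simpa using this
      refine tendsto_nhdsWithin_of_tendsto_nhds_of_eventually_within _ ?_ ?_
      · exact (Complex.continuous_ofReal.tendsto _).comp h1
      · refine Eventually.of_forall fun k => ?_
        simp only [u, Set.mem_compl_iff, Set.mem_singleton_iff, ne_eq,
          Complex.ofReal_inj]
        have : (0 : ℝ) < ε / 4 * (1 / (k + 1)) := by positivity
        intro hEq
        nlinarith
    refine htend.frequently (Eventually.of_forall fun k => ?_).frequently
    have hk1 : (0 : ℝ) < 1 / ((k : ℝ) + 1) := by positivity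
    have hk2 : (1 : ℝ) / ((k : ℝ) + 1) ≤ 1 := by
      rw [div_le_one (by positivity)]; linarith [Nat.cast_nonneg (α := ℝ) k]
    have hmem : (ε / 2 + ε / 4 * (1 / (k + 1))) ∈ Set.Ioo (0 : ℝ) ε := by
      constructor
      · positivity
      · nlinarith
    have := hG_real _ hmem.1.le
    rw [hu]
    simp only
    rw [this, hg_eq _ hmem]
  have hGeq : Set.EqOn G (fun _ => ((S : ℝ) : ℂ)) U := by
    refine AnalyticOnNhd.eqOn_of_preconnected_of_frequently_eq hGanal
      analyticOnNhd_const hUconn ?_ hfreq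
    simp [hUdef, hε]
  -- hence g t = S for all t > 0
  have hg_all : ∀ t : ℝ, 0 < t → g t = S := by
    intro t ht
    have hmem : (t : ℂ) ∈ U := by simp [hUdef, ht]
    have := hGeq hmem
    rw [hG_real t ht.le] at this
    simp only at this
    exact_mod_cast this
  -- S = 0 by letting t → ∞
  have hS0 : S = 0 := by
    have hlim : Tendsto g atTop (𝓝 0) := by
      have := tendsto_tsum_of_dominated_convergence (𝓕 := (atTop : Filter ℝ)) (f := fun (t : ℝ) n => a n * Real.exp (-lam n * t))
        (g := fun _ => (0 : ℝ)) (bound := fun n => |a n|) ha ?_ ?_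
      · simpa [hgdef] using this
      · intro n
        have h1 : Tendsto (fun t : ℝ => -lam n * t) atTop atBot :=
          tendsto_id.const_mul_atTop_of_neg (neg_neg_iff_pos.mpr (hpos n))
        have := Real.tendsto_exp_atBot.comp h1
        simpa using this.const_mul (a n)
      · filter_upwards [eventually_ge_atTop (0 : ℝ)] with t ht
        intro n
        rw [norm_mul, Real.norm_eq_abs, Real.norm_eq_abs, Real.abs_exp]
        have : Real.exp (-lam n * t) ≤ 1 := by
          rw [Real.exp_le_one_iff]
          exact mul_nonpos_of_nonpos_of_nonneg (neg_nonpos.mpr (hpos n).le) ht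
        calc |a n| * Real.exp (-lam n * t) ≤ |a n| * 1 :=
              mul_le_mul_of_nonneg_left this (abs_nonneg _)
          _ = |a n| := mul_one _
    have hconst : Tendsto g atTop (𝓝 S) := by
      refine Tendsto.congr' ?_ tendsto_const_nhds
      filter_upwards [eventually_gt_atTop (0 : ℝ)] with t ht
      exact (hg_all t ht).symm
    exact tendsto_nhds_unique hconst hlim
  -- strong induction on n
  intro n
  induction n using Nat.strong_induction_on with
  | _ n ih =>
    set F : ℝ → ℕ → ℝ := fun t k => a k * Real.exp (-(lam k - lam n) * t) with hF
    have hFsum : ∀ t : ℝ, 0 < t → ∑' k, F t k = 0 := by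
      intro t ht
      have hrw : ∀ k, F t k = Real.exp (lam n * t) * (a k * Real.exp (-lam k * t)) := by
        intro k
        show a k * Real.exp (-(lam k - lam n) * t) = _
        have hx : -(lam k - lam n) * t = lam n * t + -lam k * t := by ring
        rw [hx, Real.exp_add]
        ring
      calc ∑' k, F t k = ∑' k, Real.exp (lam n * t) * (a k * Real.exp (-lam k * t)) := by
            exact tsum_congr hrw
        _ = Real.exp (lam n * t) * ∑' k, a k * Real.exp (-lam k * t) := tsum_mul_left
        _ = Real.exp (lam n * t) * g t := rfl
        _ = 0 := by rw [hg_all t ht, hS0, mul_zero]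
    -- pointwise limits
    have hlim : Tendsto (fun t => ∑' k, F t k) atTop
        (𝓝 (∑' k, if k = n then a n else 0)) := by
      refine tendsto_tsum_of_dominated_convergence (bound := fun k => |a k|) ha ?_ ?_
      · intro k
        rcases lt_trichotomy k n with hk | hk | hk
        · simp only [hF, ih k hk, zero_mul, if_neg hk.ne]
          exact tendsto_const_nhds
        · subst hk
          simp only [hF, sub_self, neg_zero, zero_mul, Real.exp_zero, mul_one, if_pos rfl]
          exact tendsto_const_nhds
        · simp only [hF, if_neg hk.ne']
          have hpos' : 0 < lam k - lam n := sub_pos.mpr (hmono hk)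
          have h1 : Tendsto (fun t : ℝ => -(lam k - lam n) * t) atTop atBot :=
            tendsto_id.const_mul_atTop_of_neg (neg_neg_iff_pos.mpr hpos')
          have := Real.tendsto_exp_atBot.comp h1
          simpa using this.const_mul (a k)
      · filter_upwards [eventually_ge_atTop (0 : ℝ)] with t ht
        intro k
        rcases lt_or_ge k n with hk | hk
        · simp [hF, ih k hk]
        · rw [hF]
          simp only [norm_mul, Real.norm_eq_abs, Real.abs_exp]
          have hle : Real.exp (-(lam k - lam n) * t) ≤ 1 := by
            rw [Real.exp_le_one_iff]
            have : 0 ≤ lam k - lam n := sub_nonneg.mpr (hmono.monotone hk)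
            exact mul_nonpos_of_nonpos_of_nonneg (by linarith) ht
          calc |a k| * Real.exp (-(lam k - lam n) * t) ≤ |a k| * 1 :=
                mul_le_mul_of_nonneg_left hle (abs_nonneg _)
            _ = |a k| := mul_one _
    have hzero : Tendsto (fun t => ∑' k, F t k) atTop (𝓝 0) := by
      refine Tendsto.congr' ?_ tendsto_const_nhds
      filter_upwards [eventually_gt_atTop (0 : ℝ)] with t ht
      exact (hFsum t ht).symm
    have := tendsto_nhds_unique hlim hzero
    rwa [tsum_ite_eq] at this
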